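/- For any binary relation R on V and any subset B ⊆ V, the foreset of B under the reflexive-transitive closure of R equals the foreset of B under the reflexive-transitive closure of Δ_{Bᶜ}R; that is, R* B = (Δ_{Bᶜ} R)* B. -/

import Mathlib

open Relation Set

local infixr:80 " ∘r " => Relation.Comp

variable {V : Type*}

/-- Subdiagonal relation on a subset `X` of `V`. -/
def dia (X : Set V) : V → V → Prop := fun a b => a = b ∧ a ∈ X

/-- Foreset of a subset `C` under a relation `R`. -/
def foreset (R : V → V → Prop) (C : Set V) : Set V := {a | ∃ c ∈ C, R a c}

theorem stmt2 (R : V → V → Prop) (B : Set V) :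
    foreset (ReflTransGen R) B = foreset (ReflTransGen (dia Bᶜ ∘r R)) B := by
  ext a
  constructor
  · rintro ⟨c, hc, hac⟩
    induction hac using ReflTransGen.head_induction_on with
    | refl => exact ⟨c, hc, ReflTransGen.refl⟩
    | head h _ ih =>
      rename_i x y _
      by_cases hx : x ∈ B
      · exact ⟨x, hx, ReflTransGen.refl⟩
      · obtain ⟨c', hc', hp⟩ := ih
        exact ⟨c', hc', ReflTransGen.head ⟨x, ⟨rfl, hx⟩, h⟩ hp⟩
  · rintro ⟨c, hc, hac⟩
    refine ⟨c, hc, ReflTransGen.mono ?_ a c hac⟩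
    rintro x y ⟨z, ⟨rfl, _⟩, h⟩
    exact h
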